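/- Let G be a group, let A and B be finite sets, and let X ⊆ A^G and Y ⊆ B^G be conjugate subshifts (i.e., there exists a bijective cellular automaton τ : X → Y). Then X is strongly irreducible if and only if Y is strongly irreducible. -/

import Mathlib

open Pointwise Filter

variable {G : Type*} [Group G]

/-- The shift action of `G` on configurations: `(g • x)(h) = x(g⁻¹h)`. -/
def shift {A : Type*} (g : G) (x : G → A) : G → A := fun h => x (g⁻¹ * h)

/-- A subshift: a closed, shift-invariant subset of `A^G` (prodiscrete topology). -/
def IsSubshift {A : Type*} [TopologicalSpace A] (X : Set (G → A)) : Prop :=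
  IsClosed X ∧ ∀ g : G, ∀ x ∈ X, shift g x ∈ X

/-- The `Δ`-neighborhood `Ω^{+Δ} = ΩΔ⁻¹ = {g : gΔ ∩ Ω ≠ ∅}`. -/
def plusNbhd (Ω Δ : Set G) : Set G := {g : G | ∃ d ∈ Δ, g * d ∈ Ω}

/-- `Δ`-irreducibility of a subshift. -/
def DeltaIrreducible {A : Type*} (Δ : Finset G) (X : Set (G → A)) : Prop :=
  ∀ Ω₁ Ω₂ : Finset G,
    plusNbhd (Ω₁ : Set G) (Δ : Set G) ∩ (Ω₂ : Set G) = ∅ →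
    ∀ x₁ ∈ X, ∀ x₂ ∈ X,
      ∃ x ∈ X, (∀ g ∈ Ω₁, x g = x₁ g) ∧ (∀ g ∈ Ω₂, x g = x₂ g)

/-- Strong irreducibility: `Δ`-irreducible for some finite `Δ ⊆ G`. -/
def StronglyIrreducible {A : Type*} (X : Set (G → A)) : Prop :=
  ∃ Δ : Finset G, DeltaIrreducible Δ X

/-- A cellular automaton between subshifts `X ⊆ A^G` and `Y ⊆ B^G`:
a map that sends `X` into `Y`, is continuous on `X`, and is `G`-equivariant on `X`. -/
def IsCellularAutomaton {A B : Type*} [TopologicalSpace A] [TopologicalSpace B]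
    (X : Set (G → A)) (Y : Set (G → B)) (τ : (G → A) → (G → B)) : Prop :=
  Set.MapsTo τ X Y ∧ ContinuousOn τ X ∧ ∀ g : G, ∀ x ∈ X, τ (shift g x) = shift g (τ x)

/-- Pre-injectivity of a map on a subshift `X`. -/
def PreInjective {A B : Type*} (X : Set (G → A)) (τ : (G → A) → (G → B)) : Prop :=
  ∀ x₁ ∈ X, ∀ x₂ ∈ X, {g : G | x₁ g ≠ x₂ g}.Finite → τ x₁ = τ x₂ → x₁ = x₂

/-- A Følner net for `G`, indexed by a directed preorder `J`. -/
def IsFolnerNet {J : Type*} [Preorder J] (F : J → Finset G) : Prop :=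
  (∀ j, (F j).Nonempty) ∧
  ∀ E : Finset G,
    Tendsto (fun j => ((plusNbhd (F j : Set G) (E : Set G) \ (F j : Set G)).ncard : ℝ) /
        ((F j).card : ℝ)) atTop (nhds 0)

/-- The entropy of a subset `X ⊆ A^G` with respect to a Følner net `F`. -/
noncomputable def entropy {J A : Type*} [Preorder J] (F : J → Finset G) (X : Set (G → A)) : ℝ :=
  limsup (fun j => Real.log (((Set.restrict (F j : Set G)) '' X).ncard : ℝ) / ((F j).card : ℝ))
    atTop

/-- Topological mixing for a subshift (open subsets of `X` are traces of ambient opens). -/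
def TopologicallyMixing {A : Type*} [TopologicalSpace A] (X : Set (G → A)) : Prop :=
  ∀ U V : Set (G → A), IsOpen U → IsOpen V → (U ∩ X).Nonempty → (V ∩ X).Nonempty →
    ∃ F : Finset G, ∀ g : G, g ∉ F → ((U ∩ X) ∩ (shift g '' (V ∩ X))).Nonempty

/-- An `(E,E')`-tiling. -/
def IsTiling (E E' T : Set G) : Prop :=
  T.PairwiseDisjoint (fun g => g • E) ∧ (⋃ g ∈ T, g • E') = Set.univ

/-- Every continuous map on a closed subset of `A^G` (A finite discrete) admits a finite
memory set governing the value at the identity. -/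
lemma exists_memory {A B : Type*} [Finite A]
    [TopologicalSpace A] [DiscreteTopology A] [TopologicalSpace B] [DiscreteTopology B]
    (X : Set (G → A)) (hXc : IsClosed X) (τ : (G → A) → (G → B))
    (hcont : ContinuousOn τ X) :
    ∃ M : Finset G, ∀ x ∈ X, ∀ x' ∈ X, (∀ m ∈ M, x m = x' m) → τ x 1 = τ x' 1 := by
  classical
  have hcomp : IsCompact X := hXc.isCompact
  have key : ∀ x : G → A, ∃ F : Finset G,
      x ∈ X → ∀ x' ∈ X, (∀ m ∈ F, x' m = x m) → τ x' 1 = τ x 1 := by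
    intro x
    by_cases hx : x ∈ X
    · have h1 : Tendsto (fun z => τ z 1) (nhdsWithin x X) (nhds (τ x 1)) :=
        ((continuous_apply (1 : G)).tendsto (τ x)).comp (hcont.continuousWithinAt hx)
      have hmem : {z : G → A | τ z 1 = τ x 1} ∈ nhdsWithin x X := by
        have : {τ x 1} ∈ nhds (τ x 1) := by
          rw [nhds_discrete]; exact rfl
        exact h1 this
      obtain ⟨U, hUo, hxU, hUsub⟩ := mem_nhdsWithin.mp hmem
      obtain ⟨I, u, hIu, hpi⟩ := isOpen_pi_iff.mp hUo x hxU
      refine ⟨I, fun _ x' hx' hagree => ?_⟩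
      have hx'U : x' ∈ U := by
        apply hpi
        intro m hm
        rw [hagree m hm]
        exact (hIu m hm).2
      exact hUsub ⟨hx'U, hx'⟩
    · exact ⟨∅, fun h => absurd h hx⟩
  choose F hF using key
  obtain ⟨t, htX, htcov⟩ := hcomp.elim_nhds_subcover
    (fun c => (↑(F c) : Set G).pi (fun m => ({c m} : Set A)))
    (by
      intro c _
      refine IsOpen.mem_nhds ?_ ?_
      · exact isOpen_set_pi (Finset.finite_toSet _) (fun m _ => isOpen_discrete _)
      · intro m _; rfl)
  refine ⟨t.sup F, ?_⟩
  intro x hx x' hx' hagree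
  obtain ⟨c, hct, hxc⟩ := Set.mem_iUnion₂.mp (htcov hx)
  have hcX : c ∈ X := htX c hct
  have hxc' : ∀ m ∈ F c, x m = c m := fun m hm => hxc m hm
  have hx'c : ∀ m ∈ F c, x' m = c m := by
    intro m hm
    rw [← hagree m (Finset.mem_sup.mpr ⟨c, hct, hm⟩)]
    exact hxc' m hm
  rw [hF c hcX x hx hxc', hF c hcX x' hx' hx'c]

/-- A memory set at the identity governs all coordinates, by equivariance. -/
lemma memory_at {A B : Type*} (X : Set (G → A)) (hinv : ∀ g : G, ∀ x ∈ X, shift g x ∈ X)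
    (τ : (G → A) → (G → B)) (hequi : ∀ g : G, ∀ x ∈ X, τ (shift g x) = shift g (τ x))
    (M : Finset G) (hM : ∀ x ∈ X, ∀ x' ∈ X, (∀ m ∈ M, x m = x' m) → τ x 1 = τ x' 1)
    (x : G → A) (hx : x ∈ X) (x' : G → A) (hx' : x' ∈ X) (g : G)
    (hagree : ∀ m ∈ M, x (g * m) = x' (g * m)) : τ x g = τ x' g := by
  have h1 : τ (shift g⁻¹ x) 1 = τ (shift g⁻¹ x') 1 := by
    apply hM _ (hinv g⁻¹ x hx) _ (hinv g⁻¹ x' hx')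
    intro m hm
    simpa [shift] using hagree m hm
  rw [hequi g⁻¹ x hx, hequi g⁻¹ x' hx'] at h1
  simpa [shift] using h1

/-- Strong irreducibility passes through a surjective cellular automaton. -/
lemma si_transfer {A B : Type*} [Finite A]
    [TopologicalSpace A] [DiscreteTopology A] [TopologicalSpace B] [DiscreteTopology B]
    (X : Set (G → A)) (hX : IsSubshift X) (Y : Set (G → B))
    (τ : (G → A) → (G → B)) (hmaps : Set.MapsTo τ X Y) (hcont : ContinuousOn τ X)
    (hequi : ∀ g : G, ∀ x ∈ X, τ (shift g x) = shift g (τ x))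
    (hsurj : Y ⊆ τ '' X) :
    StronglyIrreducible X → StronglyIrreducible Y := by
  classical
  rintro ⟨Δ, hΔ⟩
  obtain ⟨M, hM⟩ := exists_memory X hX.1 τ hcont
  refine ⟨(M ×ˢ Δ ×ˢ M).image (fun p => p.1 * p.2.1 * p.2.2⁻¹), ?_⟩
  intro Ω₁ Ω₂ hdisj y₁ hy₁ y₂ hy₂
  obtain ⟨x₁, hx₁, rfl⟩ := hsurj hy₁
  obtain ⟨x₂, hx₂, rfl⟩ := hsurj hy₂
  have hdisj' : plusNbhd ((Ω₁ * M : Finset G) : Set G) (Δ : Set G) ∩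
      ((Ω₂ * M : Finset G) : Set G) = ∅ := by
    rw [Set.eq_empty_iff_forall_notMem]
    rintro g ⟨⟨d, hd, hgd⟩, hg2⟩
    rw [Finset.mem_coe, Finset.mem_mul] at hgd hg2
    obtain ⟨ω₁, hω₁, m₁, hm₁, h1⟩ := hgd
    obtain ⟨ω₂, hω₂, m₂, hm₂, h2⟩ := hg2
    have hmem : ω₂ ∈ plusNbhd (Ω₁ : Set G)
        ((((M ×ˢ Δ ×ˢ M).image (fun p => p.1 * p.2.1 * p.2.2⁻¹)) : Finset G) : Set G) ∩
        (Ω₂ : Set G) := by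
      refine ⟨⟨m₂ * d * m₁⁻¹, ?_, ?_⟩, hω₂⟩
      · exact Finset.mem_coe.mpr (Finset.mem_image.mpr
          ⟨(m₂, d, m₁), by simp [Finset.mem_product, hm₂, Finset.mem_coe.mp hd, hm₁], by simp⟩)
      · have hω : ω₂ * (m₂ * d * m₁⁻¹) = ω₁ := by
          have h3 : ω₂ * m₂ * d = ω₁ * m₁ := by rw [h2, h1]
          rw [show ω₂ * (m₂ * d * m₁⁻¹) = ω₂ * m₂ * d * m₁⁻¹ by group, h3,
            mul_inv_cancel_right]
        rw [hω]; exact hω₁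
    rw [hdisj] at hmem
    exact hmem
  obtain ⟨x, hx, ha1, ha2⟩ := hΔ (Ω₁ * M) (Ω₂ * M) hdisj' x₁ hx₁ x₂ hx₂
  refine ⟨τ x, hmaps hx, ?_, ?_⟩
  · intro g hg
    exact memory_at X hX.2 τ hequi M hM x hx x₁ hx₁ g
      (fun m hm => ha1 _ (Finset.mul_mem_mul hg hm))
  · intro g hg
    exact memory_at X hX.2 τ hequi M hM x hx x₂ hx₂ g
      (fun m hm => ha2 _ (Finset.mul_mem_mul hg hm))

/-- Strong irreducibility is a conjugacy invariant of subshifts. -/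
theorem stronglyIrreducible_conjugacy_invariant {A B : Type*} [Fintype A] [Fintype B]
    [TopologicalSpace A] [DiscreteTopology A] [TopologicalSpace B] [DiscreteTopology B]
    (X : Set (G → A)) (hX : IsSubshift X) (Y : Set (G → B)) (hY : IsSubshift Y)
    (τ : (G → A) → (G → B)) (hτ : IsCellularAutomaton X Y τ)
    (hinj : Set.InjOn τ X) (hsurj : τ '' X = Y) :
    StronglyIrreducible X ↔ StronglyIrreducible Y := by
  classical
  obtain ⟨hmaps, hcont, hequi⟩ := hτ
  rcases X.eq_empty_or_nonempty with hXe | ⟨x₀, hx₀⟩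
  · have hYe : Y = ∅ := by rw [← hsurj, hXe, Set.image_empty]
    constructor <;> intro _
    · exact ⟨∅, fun Ω₁ Ω₂ _ y₁ hy₁ => by rw [hYe] at hy₁; exact absurd hy₁ (Set.notMem_empty _)⟩
    · exact ⟨∅, fun Ω₁ Ω₂ _ x₁ hx₁ => by rw [hXe] at hx₁; exact absurd hx₁ (Set.notMem_empty _)⟩
  have hNA : Nonempty (G → A) := ⟨x₀⟩
  -- the inverse map
  set σ := Function.invFunOn τ X with hσdef
  have hσX : ∀ y ∈ Y, σ y ∈ X ∧ τ (σ y) = y := by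
    intro y hy
    rw [← hsurj] at hy
    obtain ⟨x, hx, hxy⟩ := hy
    exact ⟨Function.invFunOn_mem ⟨x, hx, hxy⟩, Function.invFunOn_eq ⟨x, hx, hxy⟩⟩
  have hleft : ∀ x ∈ X, σ (τ x) = x := by
    intro x hx
    have h := hσX (τ x) (hmaps hx)
    exact hinj h.1 hx h.2
  have hσmaps : Set.MapsTo σ Y X := fun y hy => (hσX y hy).1
  have hσequi : ∀ g : G, ∀ y ∈ Y, σ (shift g y) = shift g (σ y) := by
    intro g y hy
    obtain ⟨hσy, hτσy⟩ := hσX y hy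
    have h1 : shift g y = τ (shift g (σ y)) := by rw [hequi g _ hσy, hτσy]
    rw [h1, hleft _ (hX.2 g _ hσy)]
  -- continuity of σ on Y, via compactness
  have hXcompact : IsCompact X := hX.1.isCompact
  haveI : CompactSpace X := isCompact_iff_compactSpace.mp hXcompact
  have hbij : Function.Bijective (fun x : X => (⟨τ x, hmaps x.2⟩ : Y)) := by
    constructor
    · intro a b hab
      exact Subtype.ext (hinj a.2 b.2 (congrArg Subtype.val hab))
    · intro y
      obtain ⟨x, hx, hxy⟩ := hsurj.symm.subset y.2
      exact ⟨⟨x, hx⟩, Subtype.ext hxy⟩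
  let e : X ≃ Y := Equiv.ofBijective _ hbij
  have hecont : Continuous (⇑e) :=
    (continuousOn_iff_continuous_restrict.mp hcont).subtype_mk _
  let h : X ≃ₜ Y := hecont.homeoOfEquivCompactToT2
  have hσcont : ContinuousOn σ Y := by
    rw [continuousOn_iff_continuous_restrict]
    have hrestr : Y.domRestrict σ = fun y => ((h.symm y : X) : G → A) := by
      funext y
      have h1 := hσX y.1 y.2
      have h2 : τ ((h.symm y : X) : G → A) = y.1 := by
        have := h.apply_symm_apply y
        exact congrArg Subtype.val this
      exact hinj h1.1 (h.symm y).2 (by rw [h1.2, h2])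
    rw [hrestr]
    exact continuous_subtype_val.comp h.symm.continuous
  have hXsub : X ⊆ σ '' Y := fun x hx => ⟨τ x, hmaps hx, hleft x hx⟩
  constructor
  · exact si_transfer X hX Y τ hmaps hcont hequi hsurj.symm.subset
  · exact si_transfer Y hY X σ hσmaps hσcont hσequi hXsub
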